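/- For any real number β with q·β - k ∈ [q/Q, 2q/Q] for some integer k, where q, Q are positive integers with Q ≥ 100q, and for every integer N with 1 ≤ N ≤ Q/(100q), the geometric sum Δ(N) = Σ_{n=0}^{N-1} e^{2πi q n β} satisfies |Δ(N)/N - 1| ≤ 1/2. -/

import Mathlib

open Finset Complex

theorem stmt_0 (q Q : ℕ) (hq : 0 < q) (hQ : 0 < Q) (hQq : 100 * q ≤ Q)
    (k : ℤ) (β : ℝ)
    (h1 : (q : ℝ) / Q ≤ q * β - k) (h2 : (q : ℝ) * β - k ≤ 2 * q / Q)
    (N : ℕ) (hN1 : 1 ≤ N) (hN2 : (N : ℝ) ≤ Q / (100 * q)) :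
    ‖(∑ n ∈ Finset.range N,
        Complex.exp (2 * Real.pi * Complex.I * q * n * β)) / N - 1‖ ≤ 1 / 2 := by
  set θ : ℝ := q * β - k with hθdef
  have hq' : (0:ℝ) < q := by exact_mod_cast hq
  have hQ' : (0:ℝ) < Q := by exact_mod_cast hQ
  have hθ0 : 0 < θ := lt_of_lt_of_le (by positivity) h1
  have hNθ : (N:ℝ) * θ ≤ 1/50 := by
    calc (N:ℝ) * θ ≤ (Q/(100*q)) * (2*q/Q) :=
          mul_le_mul hN2 h2 hθ0.le (by positivity)
      _ = 1/50 := by field_simp; ring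
  have hterm : ∀ n : ℕ, Complex.exp (2 * Real.pi * Complex.I * q * n * β)
      = Complex.exp ((2 * Real.pi * n * θ) * Complex.I) := by
    intro n
    calc Complex.exp (2 * Real.pi * Complex.I * q * n * β)
        = Complex.exp ((2 * Real.pi * n * θ) * Complex.I)
            * Complex.exp ((((n : ℤ) * k : ℤ) : ℂ) * (2 * Real.pi * Complex.I)) := by
          rw [← Complex.exp_add]; congr 1; simp only [hθdef]; push_cast; ring
      _ = Complex.exp ((2 * Real.pi * n * θ) * Complex.I) := by
          rw [Complex.exp_int_mul_two_pi_mul_I, mul_one]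
  have hN' : (0:ℝ) < N := by exact_mod_cast hN1
  have hsum : (∑ n ∈ Finset.range N, Complex.exp (2 * Real.pi * Complex.I * q * n * β))
      = ∑ n ∈ Finset.range N, Complex.exp ((2 * Real.pi * n * θ) * Complex.I) :=
    Finset.sum_congr rfl fun n _ => hterm n
  rw [hsum]
  have hNC : (N:ℂ) ≠ 0 := by exact_mod_cast hN'.ne'
  have hrw : (∑ n ∈ Finset.range N, Complex.exp ((2 * Real.pi * n * θ) * Complex.I)) / N - 1
      = (∑ n ∈ Finset.range N, (Complex.exp ((2 * Real.pi * n * θ) * Complex.I) - 1)) / N := by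
    rw [Finset.sum_sub_distrib, Finset.sum_const, Finset.card_range]
    field_simp
    simp only [nsmul_eq_mul, mul_one]; congr 1; exact Finset.sum_congr rfl fun x _ => by ring_nf
  rw [hrw, norm_div, Complex.norm_natCast, div_le_iff₀ hN']
  have hbound : ∀ n ∈ Finset.range N,
      ‖Complex.exp ((2 * Real.pi * n * θ) * Complex.I) - 1‖ ≤ 1/2 := by
    intro n hn
    have hnN : (n:ℝ) ≤ N := by
      exact_mod_cast (Finset.mem_range.mp hn).le
    have hnθ : (n:ℝ) * θ ≤ 1/50 := le_trans (by nlinarith) hNθ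
    have hcast : ((2 * Real.pi * n * θ : ℝ) : ℂ) = 2 * (Real.pi : ℂ) * n * θ := by
      push_cast; ring
    have habs : ‖(2 * (Real.pi : ℂ) * n * θ) * Complex.I‖ = 2 * Real.pi * n * θ := by
      rw [← hcast, norm_mul, Complex.norm_I, mul_one,
        Complex.norm_of_nonneg (by positivity)]
    have hpi : Real.pi ≤ 4 := Real.pi_le_four
    have hkey : 2 * Real.pi * ((n:ℝ) * θ) ≤ 2 * Real.pi * (1/50) :=
      mul_le_mul_of_nonneg_left hnθ (by positivity)
    have h1' : ‖(2 * (Real.pi : ℂ) * n * θ) * Complex.I‖ ≤ 1 := by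
      rw [habs]; nlinarith
    have := Complex.norm_exp_sub_one_le h1'
    rw [habs] at this
    nlinarith
  calc ‖∑ n ∈ Finset.range N, (Complex.exp ((2 * Real.pi * n * θ) * Complex.I) - 1)‖
      ≤ ∑ n ∈ Finset.range N, ‖Complex.exp ((2 * Real.pi * n * θ) * Complex.I) - 1‖ :=
        norm_sum_le _ _
    _ ≤ ∑ _n ∈ Finset.range N, (1/2 : ℝ) := Finset.sum_le_sum hbound
    _ = N * (1/2) := by simp [mul_comm]
    _ = 1/2 * N := by ring
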